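/- The function f(t) = -t/4 + (t/2)∫_{2/t}^∞ (x - 2/t)² φ(x) dx satisfies |f'(t)| ≤ 1/4 for all t > 0, where f'(t) = -1/4 + (1/2)∫_{2/t}^∞ (x² - 4/t²) φ(x) dx. -/

import Mathlib

open Real Set MeasureTheory Filter

/-- standard normal density -/
noncomputable def stdPDF (x : ℝ) : ℝ := Real.exp (-x ^ 2 / 2) / Real.sqrt (2 * Real.pi)

lemma stdPDF_eq (x : ℝ) : stdPDF x = (Real.sqrt (2 * π))⁻¹ * Real.exp (-(1/2 : ℝ) * x ^ 2) := by
  unfold stdPDF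
  rw [div_eq_inv_mul]
  ring_nf

lemma sqrt2pi_pos : 0 < Real.sqrt (2 * π) := Real.sqrt_pos.2 (by positivity)

lemma stdPDF_nonneg (x : ℝ) : 0 ≤ stdPDF x := by
  unfold stdPDF; positivity

lemma stdPDF_neg (x : ℝ) : stdPDF (-x) = stdPDF x := by
  unfold stdPDF; rw [neg_pow]; norm_num

lemma continuous_stdPDF : Continuous stdPDF := by
  unfold stdPDF; fun_prop

lemma hasDerivAt_stdPDF (x : ℝ) : HasDerivAt stdPDF (-x * stdPDF x) x := by
  unfold stdPDF
  have h : HasDerivAt (fun y : ℝ => -y ^ 2 / 2) (-x) x := by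
    have := ((hasDerivAt_pow 2 x).neg).div_const 2
    refine this.congr_deriv ?_
    norm_num
    ring
  have h2 := (h.exp).div_const (Real.sqrt (2 * π))
  refine h2.congr_deriv ?_
  ring

lemma integrable_stdPDF : Integrable stdPDF := by
  rw [funext stdPDF_eq]
  exact (integrable_exp_neg_mul_sq (by norm_num : (0:ℝ) < 1/2)).const_mul _

lemma integrable_mul_stdPDF : Integrable (fun x => x * stdPDF x) := by
  simp_rw [stdPDF_eq]
  have h := (integrable_mul_exp_neg_mul_sq (by norm_num : (0:ℝ) < 1/2)).const_mul
    (Real.sqrt (2 * π))⁻¹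
  convert h using 2 with x
  ring

lemma integrable_sq_stdPDF : Integrable (fun x => x ^ 2 * stdPDF x) := by
  simp_rw [stdPDF_eq]
  have h := (integrable_rpow_mul_exp_neg_mul_sq (b := 1/2) (by norm_num) (s := 2)
    (by norm_num)).const_mul (Real.sqrt (2 * π))⁻¹
  convert h using 2 with x
  rw [show ((2:ℝ) = ((2:ℕ):ℝ)) by norm_num, Real.rpow_natCast]
  ring

lemma tendsto_stdPDF_atTop : Tendsto stdPDF atTop (nhds 0) := by
  rw [funext stdPDF_eq]
  have h1 : Tendsto (fun x : ℝ => -(1/2 : ℝ) * x ^ 2) atTop atBot := by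
    have h2 : Tendsto (fun x : ℝ => x ^ 2) atTop atTop :=
      tendsto_pow_atTop (by norm_num)
    exact h2.const_mul_atTop_of_neg (by norm_num)
  have := Real.tendsto_exp_atBot.comp h1
  simpa using this.const_mul (Real.sqrt (2 * π))⁻¹

lemma tendsto_mul_stdPDF_atTop : Tendsto (fun x => x * stdPDF x) atTop (nhds 0) := by
  have ho := rpow_mul_exp_neg_mul_sq_isLittleO_exp_neg (b := 1/2) (by norm_num) 1
  have hexp : Tendsto (fun x : ℝ => Real.exp (-(1/2 : ℝ) * x)) atTop (nhds 0) := by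
    have h1 : Tendsto (fun x : ℝ => -(1/2 : ℝ) * x) atTop atBot :=
      tendsto_id.const_mul_atTop_of_neg (by norm_num)
    exact Real.tendsto_exp_atBot.comp h1
  have h0 : Tendsto (fun x : ℝ => x ^ (1:ℝ) * Real.exp (-(1/2:ℝ) * x ^ 2)) atTop (nhds 0) :=
    ho.isBigO.trans_tendsto hexp
  have h0' : Tendsto (fun x : ℝ => x * Real.exp (-(1/2:ℝ) * x ^ 2)) atTop (nhds 0) := by
    refine h0.congr fun x => by rw [Real.rpow_one]
  have := h0'.const_mul (Real.sqrt (2 * π))⁻¹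
  rw [mul_zero] at this
  refine this.congr fun x => ?_
  rw [stdPDF_eq]; ring

noncomputable def Gfun (a : ℝ) : ℝ := ∫ x in Set.Ioi a, stdPDF x

lemma integral_mul_stdPDF_Ioi (a : ℝ) : ∫ x in Set.Ioi a, x * stdPDF x = stdPDF a := by
  have h := integral_Ioi_of_hasDerivAt_of_tendsto
    (f := fun x => -stdPDF x) (f' := fun x => x * stdPDF x) (a := a)
    ((continuous_stdPDF.neg).continuousWithinAt)
    (fun x _ => (hasDerivAt_stdPDF x).neg.congr_deriv (by ring))
    (integrable_mul_stdPDF.integrableOn)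
    (by simpa using tendsto_stdPDF_atTop.neg)
  rw [h]; ring

lemma integral_sq_sub_one_stdPDF_Ioi (a : ℝ) :
    ∫ x in Set.Ioi a, (x ^ 2 - 1) * stdPDF x = a * stdPDF a := by
  have hder : ∀ x : ℝ, HasDerivAt (fun y => -(y * stdPDF y)) ((x ^ 2 - 1) * stdPDF x) x := by
    intro x
    have h0 := ((hasDerivAt_id x).mul (hasDerivAt_stdPDF x)).neg
    simp only [id_eq] at h0
    refine h0.congr_deriv ?_
    ring
  have hint : Integrable (fun x : ℝ => (x ^ 2 - 1) * stdPDF x) := by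
    have := integrable_sq_stdPDF.sub integrable_stdPDF
    refine this.congr (Filter.Eventually.of_forall fun x => ?_)
    simp only [Pi.sub_apply]
    ring
  have h := integral_Ioi_of_hasDerivAt_of_tendsto
    (f := fun y => -(y * stdPDF y)) (f' := fun x => (x ^ 2 - 1) * stdPDF x) (a := a)
    ((continuous_id.mul continuous_stdPDF).neg.continuousWithinAt)
    (fun x _ => hder x)
    (hint.integrableOn)
    (by simpa using tendsto_mul_stdPDF_atTop.neg)
  rw [h]; ring

lemma integral_sq_stdPDF_Ioi (a : ℝ) :
    ∫ x in Set.Ioi a, x ^ 2 * stdPDF x = a * stdPDF a + Gfun a := by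
  have h1 : ∫ x in Set.Ioi a, (x ^ 2 - 1) * stdPDF x
      = (∫ x in Set.Ioi a, x ^ 2 * stdPDF x) - ∫ x in Set.Ioi a, stdPDF x := by
    rw [← integral_sub (integrable_sq_stdPDF.integrableOn) (integrable_stdPDF.integrableOn)]
    refine integral_congr_ae (Filter.Eventually.of_forall fun x => ?_)
    ring
  have h2 := integral_sq_sub_one_stdPDF_Ioi a
  rw [h1] at h2
  unfold Gfun
  linarith

lemma hasDerivAt_Gfun (a : ℝ) : HasDerivAt Gfun (-stdPDF a) a := by
  have key : Gfun = fun b => Gfun 0 - ∫ x in (0:ℝ)..b, stdPDF x := by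
    funext b
    have h1 : (∫ x in Set.Iic b, stdPDF x) - ∫ x in Set.Iic (0:ℝ), stdPDF x
        = ∫ x in (0:ℝ)..b, stdPDF x :=
      intervalIntegral.integral_Iic_sub_Iic (integrable_stdPDF.integrableOn) (integrable_stdPDF.integrableOn)
    have h2 : (∫ x in Set.Iic b, stdPDF x) + Gfun b = ∫ x, stdPDF x :=
      intervalIntegral.integral_Iic_add_Ioi (integrable_stdPDF.integrableOn) (integrable_stdPDF.integrableOn)
    have h3 : (∫ x in Set.Iic (0:ℝ), stdPDF x) + Gfun 0 = ∫ x, stdPDF x :=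
      intervalIntegral.integral_Iic_add_Ioi (integrable_stdPDF.integrableOn) (integrable_stdPDF.integrableOn)
    linarith
  rw [key]
  have hd : HasDerivAt (fun b => ∫ x in (0:ℝ)..b, stdPDF x) (stdPDF a) a :=
    intervalIntegral.integral_hasDerivAt_right
      (integrable_stdPDF.intervalIntegrable)
      (continuous_stdPDF.stronglyMeasurableAtFilter _ _)
      (continuous_stdPDF.continuousAt)
  simpa using hd.const_sub (Gfun 0)

lemma integral_stdPDF : ∫ x, stdPDF x = 1 := by
  rw [funext stdPDF_eq, integral_const_mul, integral_gaussian]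
  rw [show π / (1/2 : ℝ) = 2 * π by ring]
  exact inv_mul_cancel₀ (ne_of_gt sqrt2pi_pos)

lemma integral_sq_stdPDF_total : ∫ x, x ^ 2 * stdPDF x = 1 := by
  have hbot : Tendsto (fun x => -(x * stdPDF x)) atBot (nhds 0) := by
    have h := tendsto_mul_stdPDF_atTop.comp tendsto_neg_atBot_atTop
    have h2 : Tendsto (fun x : ℝ => -x * stdPDF (-x)) atBot (nhds 0) := h
    refine h2.congr fun x => ?_
    rw [stdPDF_neg]; ring
  have hint : Integrable (fun x : ℝ => (x ^ 2 - 1) * stdPDF x) := by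
    have := integrable_sq_stdPDF.sub integrable_stdPDF
    refine this.congr (Filter.Eventually.of_forall fun x => ?_)
    simp only [Pi.sub_apply]
    ring
  have hIic : ∫ x in Set.Iic (0:ℝ), (x ^ 2 - 1) * stdPDF x = 0 := by
    have hder : ∀ x : ℝ, HasDerivAt (fun y => -(y * stdPDF y)) ((x ^ 2 - 1) * stdPDF x) x := by
      intro x
      have h0 := ((hasDerivAt_id x).mul (hasDerivAt_stdPDF x)).neg
      simp only [id_eq] at h0
      refine h0.congr_deriv ?_
      ring
    have h := integral_Iic_of_hasDerivAt_of_tendsto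
      (f := fun y => -(y * stdPDF y)) (f' := fun x => (x ^ 2 - 1) * stdPDF x) (a := (0:ℝ))
      ((continuous_id.mul continuous_stdPDF).neg.continuousWithinAt)
      (fun x _ => hder x)
      (hint.integrableOn)
      hbot
    rw [h]; simp
  have hIoi : ∫ x in Set.Ioi (0:ℝ), (x ^ 2 - 1) * stdPDF x = 0 := by
    simpa using integral_sq_sub_one_stdPDF_Ioi 0
  have htot : ∫ x, (x ^ 2 - 1) * stdPDF x = 0 := by
    rw [← intervalIntegral.integral_Iic_add_Ioi (hint.integrableOn) (hint.integrableOn), hIic, hIoi]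
    ring
  have h4 : ∫ x, (x ^ 2 - 1) * stdPDF x
      = (∫ x, x ^ 2 * stdPDF x) - ∫ x, stdPDF x := by
    rw [← integral_sub integrable_sq_stdPDF integrable_stdPDF]
    refine integral_congr_ae (Filter.Eventually.of_forall fun x => ?_)
    ring
  rw [h4, integral_stdPDF] at htot
  linarith

theorem f_deriv_bound
    (f : ℝ → ℝ)
    (hf : ∀ t : ℝ, 0 < t →
      f t = -t / 4 + t / 2 * ∫ x in Set.Ioi (2 / t), (x - 2 / t) ^ 2 * stdPDF x) :
    ∀ t : ℝ, 0 < t →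
      HasDerivAt f (-1 / 4 + 1 / 2 * ∫ x in Set.Ioi (2 / t), (x ^ 2 - 4 / t ^ 2) * stdPDF x) t ∧
      |(-1 / 4 + 1 / 2 * ∫ x in Set.Ioi (2 / t), (x ^ 2 - 4 / t ^ 2) * stdPDF x)| ≤ 1 / 4 := by
  intro t ht
  have ht0 : t ≠ 0 := ne_of_gt ht
  have ha : 0 < 2 / t := by positivity
  -- the key integral identity
  have hJ : ∫ x in Set.Ioi (2/t), (x ^ 2 - 4 / t ^ 2) * stdPDF x
      = (2/t) * stdPDF (2/t) + (1 - (2/t)^2) * Gfun (2/t) := by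
    have hrw : (fun x : ℝ => (x ^ 2 - 4 / t ^ 2) * stdPDF x)
        = fun x => x ^ 2 * stdPDF x - (2/t)^2 * stdPDF x := by
      funext x; field_simp; ring
    rw [hrw, integral_sub (integrable_sq_stdPDF.integrableOn)
      ((integrable_stdPDF.const_mul _).integrableOn), integral_const_mul,
      integral_sq_stdPDF_Ioi]
    show _ - _ * Gfun (2/t) = _
    ring
  -- the bound
  have hJnonneg : 0 ≤ ∫ x in Set.Ioi (2/t), (x ^ 2 - 4 / t ^ 2) * stdPDF x := by
    refine setIntegral_nonneg measurableSet_Ioi fun x hx => ?_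
    have hx' : 2/t < x := hx
    have h42 : 4 / t ^ 2 = (2/t)^2 := by field_simp; ring
    refine mul_nonneg ?_ (stdPDF_nonneg x)
    rw [h42]
    nlinarith
  have hJle : ∫ x in Set.Ioi (2/t), (x ^ 2 - 4 / t ^ 2) * stdPDF x ≤ 1 := by
    have hint : IntegrableOn (fun x : ℝ => (x ^ 2 - 4 / t ^ 2) * stdPDF x) (Set.Ioi (2/t)) := by
      have hrw : (fun x : ℝ => (x ^ 2 - 4 / t ^ 2) * stdPDF x)
          = fun x => x ^ 2 * stdPDF x - (4/t^2) * stdPDF x := by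
        funext x; ring
      rw [hrw]
      exact (integrable_sq_stdPDF.sub (integrable_stdPDF.const_mul _)).integrableOn
    have h1 : ∫ x in Set.Ioi (2/t), (x ^ 2 - 4 / t ^ 2) * stdPDF x
        ≤ ∫ x in Set.Ioi (2/t), x ^ 2 * stdPDF x := by
      refine setIntegral_mono_on hint (integrable_sq_stdPDF.integrableOn)
        measurableSet_Ioi fun x _ => ?_
      have h0 : 0 ≤ 4 / t ^ 2 := by positivity
      nlinarith [stdPDF_nonneg x]
    have h2 : ∫ x in Set.Ioi (2/t), x ^ 2 * stdPDF x ≤ ∫ x, x ^ 2 * stdPDF x :=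
      setIntegral_le_integral integrable_sq_stdPDF
        (Filter.Eventually.of_forall fun x => mul_nonneg (sq_nonneg x) (stdPDF_nonneg x))
    rw [integral_sq_stdPDF_total] at h2
    linarith
  refine ⟨?_, ?_⟩
  · -- derivative
    have hda : HasDerivAt (fun s : ℝ => 2/s) (-2/t^2) t := by
      have h := (hasDerivAt_inv ht0).const_mul (2:ℝ)
      have hfn : (fun s : ℝ => 2/s) = fun s => 2 * s⁻¹ := funext fun s => div_eq_mul_inv 2 s
      rw [hfn]
      refine h.congr_deriv ?_
      field_simp
    have hg : HasDerivAt (fun s => Gfun (2/s)) (-stdPDF (2/t) * (-2/t^2)) t :=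
      (hasDerivAt_Gfun (2/t)).comp t hda
    have hq : HasDerivAt (fun s => stdPDF (2/s)) ((-(2/t) * stdPDF (2/t)) * (-2/t^2)) t :=
      (hasDerivAt_stdPDF (2/t)).comp t hda
    have hlin : HasDerivAt (fun s : ℝ => s/2 + 2/s) (1/2 + -2/t^2) t :=
      ((hasDerivAt_id t).div_const 2).add hda
    have hneg : HasDerivAt (fun s : ℝ => -s/4) (-1/4) t := by
      have h0 := ((hasDerivAt_id t).neg).div_const 4
      exact h0
    have hF : HasDerivAt (fun s : ℝ => -s/4 + (s/2 + 2/s) * Gfun (2/s) - stdPDF (2/s))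
        (-1/4 + ((1/2 + -2/t^2) * Gfun (2/t)
          + (t/2 + 2/t) * (-stdPDF (2/t) * (-2/t^2)))
          - (-(2/t) * stdPDF (2/t) * (-2/t^2))) t :=
      (hneg.add (hlin.mul hg)).sub hq
    have hFeq : ∀ s : ℝ, 0 < s →
        f s = -s/4 + (s/2 + 2/s) * Gfun (2/s) - stdPDF (2/s) := by
      intro s hs
      have hs0 : s ≠ 0 := ne_of_gt hs
      rw [hf s hs]
      have hrw : (fun x : ℝ => (x - 2/s) ^ 2 * stdPDF x)
          = fun x => (x ^ 2 * stdPDF x - (2 * (2/s)) * (x * stdPDF x)) + (2/s)^2 * stdPDF x := by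
        funext x; ring
      have i1 : Integrable (fun x : ℝ => x ^ 2 * stdPDF x - 2 * (2/s) * (x * stdPDF x)) :=
        integrable_sq_stdPDF.sub (integrable_mul_stdPDF.const_mul (2 * (2/s)))
      have i2 : Integrable (fun x : ℝ => (2/s)^2 * stdPDF x) :=
        integrable_stdPDF.const_mul ((2/s)^2)
      have i3 : Integrable (fun x : ℝ => 2 * (2/s) * (x * stdPDF x)) :=
        integrable_mul_stdPDF.const_mul (2 * (2/s))
      rw [hrw, integral_add i1.integrableOn i2.integrableOn,
        integral_sub (integrable_sq_stdPDF.integrableOn) i3.integrableOn,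
        integral_const_mul, integral_const_mul, integral_sq_stdPDF_Ioi,
        integral_mul_stdPDF_Ioi]
      show -s/4 + s/2 * ((2/s) * stdPDF (2/s) + Gfun (2/s) - 2 * (2/s) * stdPDF (2/s)
        + (2/s)^2 * Gfun (2/s)) = _
      field_simp
      ring
    have heq : f =ᶠ[nhds t] fun s : ℝ => -s/4 + (s/2 + 2/s) * Gfun (2/s) - stdPDF (2/s) := by
      filter_upwards [Ioi_mem_nhds ht] with s hs using hFeq s hs
    have hval : -1/4 + ((1/2 + -2/t^2) * Gfun (2/t)
          + (t/2 + 2/t) * (-stdPDF (2/t) * (-2/t^2)))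
          - (-(2/t) * stdPDF (2/t) * (-2/t^2))
        = -1 / 4 + 1 / 2 * ∫ x in Set.Ioi (2/t), (x ^ 2 - 4 / t ^ 2) * stdPDF x := by
      rw [hJ]
      field_simp
      ring
    rw [← hval]
    exact hF.congr_of_eventuallyEq heq
  · rw [abs_le]
    constructor <;> linarith
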